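/- Let q be a prime power and E ⊆ 𝔽_q². Let N₀(E) = #{(a,b) ∈ E² : ‖a−b‖ = 0}, where ‖v‖ = v₁² + v₂². Then N₀(E) ≤ C(|E|²/q + q|E|) for an absolute constant C. In particular, if |E| ≥ Cq then N₀(E) ≤ C'|E|² with constant C' that can be made smaller than 1/2 for suitable C. -/

import Mathlib

open scoped Classical

open Finset

lemma sq_card_le {Fq : Type} [Field Fq] [Fintype Fq] (c : Fq) :
    (Finset.univ.filter (fun z : Fq => z ^ 2 = c)).card ≤ 2 := by
  by_contra h
  push_neg at h
  obtain ⟨a, b, d, ha, hb, hd, hab, had, hbd⟩ := Finset.two_lt_card_iff.mp h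
  simp only [Finset.mem_filter] at ha hb hd
  have h1 : (a - b) * (a + b) = 0 := by
    have h' := ha.2.trans hb.2.symm; linear_combination h'
  have h2 : (a - d) * (a + d) = 0 := by
    have h' := ha.2.trans hd.2.symm; linear_combination h'
  have hb' : b = -a := by
    rcases mul_eq_zero.mp h1 with h | h
    · exact absurd (sub_eq_zero.mp h) hab
    · linear_combination h
  have hd' : d = -a := by
    rcases mul_eq_zero.mp h2 with h | h
    · exact absurd (sub_eq_zero.mp h) had
    · linear_combination h
  exact hbd (hb'.trans hd'.symm)

lemma fiber_le {Fq : Type} [Field Fq] [Fintype Fq] (a : Fin 2 → Fq) :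
    (Finset.univ.filter
      (fun b : Fin 2 → Fq => (a 0 - b 0) ^ 2 + (a 1 - b 1) ^ 2 = 0)).card
      ≤ 2 * Fintype.card Fq := by
  set S := (Finset.univ.filter
      (fun b : Fin 2 → Fq => (a 0 - b 0) ^ 2 + (a 1 - b 1) ^ 2 = 0)) with hS
  have key : S.card = ∑ x : Fq, (S.filter (fun b => b 0 = x)).card :=
    Finset.card_eq_sum_card_fiberwise (fun b _ => Finset.mem_univ _)
  rw [key]
  have hbound : ∀ x : Fq, (S.filter (fun b => b 0 = x)).card ≤ 2 := by
    intro x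
    have hinj : (S.filter (fun b => b 0 = x)).card ≤
        (Finset.univ.filter (fun z : Fq => z ^ 2 = -(a 0 - x) ^ 2)).card := by
      apply Finset.card_le_card_of_injOn (fun b => a 1 - b 1)
      · intro b hb
        simp only [Finset.mem_coe, Finset.mem_filter, hS] at hb ⊢
        obtain ⟨⟨-, heq⟩, hx⟩ := hb
        refine ⟨Finset.mem_univ _, ?_⟩
        rw [hx] at heq
        linear_combination heq
      · intro b hb c hc hbc
        simp only [Finset.mem_coe, Finset.mem_filter] at hb hc
        have h0 : b 0 = c 0 := hb.2.trans hc.2.symm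
        have h1' : b 1 = c 1 := by linear_combination -hbc
        funext i
        fin_cases i
        · simpa using h0
        · simpa using h1'
    exact hinj.trans (sq_card_le _)
  calc ∑ x : Fq, (S.filter (fun b => b 0 = x)).card
      ≤ ∑ _x : Fq, 2 := Finset.sum_le_sum (fun x _ => hbound x)
    _ = 2 * Fintype.card Fq := by simp [mul_comm]

lemma main_bound {Fq : Type} [Field Fq] [Fintype Fq] (E : Finset (Fin 2 → Fq)) :
    (((E ×ˢ E).filter
        (fun p => (p.1 0 - p.2 0) ^ 2 + (p.1 1 - p.2 1) ^ 2 = 0)).card : ℝ) ≤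
      2 * (Fintype.card Fq : ℝ) * E.card := by
  set F := (E ×ˢ E).filter
      (fun p : (Fin 2 → Fq) × (Fin 2 → Fq) =>
        (p.1 0 - p.2 0) ^ 2 + (p.1 1 - p.2 1) ^ 2 = 0) with hF
  have key : F.card = ∑ a ∈ E, (F.filter (fun p => p.1 = a)).card :=
    Finset.card_eq_sum_card_fiberwise (fun p hp => by
      simp only [hF, Finset.mem_coe, Finset.mem_filter, Finset.mem_product] at hp
      exact hp.1.1)
  have hbound : ∀ a ∈ E, (F.filter (fun p => p.1 = a)).card ≤ 2 * Fintype.card Fq := by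
    intro a _
    refine le_trans ?_ (fiber_le a)
    apply Finset.card_le_card_of_injOn (fun p => p.2)
    · intro p hp
      simp only [hF, Finset.mem_coe, Finset.mem_filter, Finset.mem_product] at hp ⊢
      obtain ⟨⟨-, heq⟩, hx⟩ := hp
      rw [hx] at heq
      exact ⟨Finset.mem_univ _, heq⟩
    · intro p hp q hq hpq
      simp only [Finset.mem_coe, Finset.mem_filter] at hp hq
      exact Prod.ext (hp.2.trans hq.2.symm) hpq
  have : F.card ≤ 2 * Fintype.card Fq * E.card := by
    rw [key]
    calc ∑ a ∈ E, (F.filter (fun p => p.1 = a)).card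
        ≤ ∑ _a ∈ E, 2 * Fintype.card Fq := Finset.sum_le_sum hbound
      _ = 2 * Fintype.card Fq * E.card := by rw [Finset.sum_const, smul_eq_mul, mul_comm]
  calc (F.card : ℝ) ≤ ((2 * Fintype.card Fq * E.card : ℕ) : ℝ) := by exact_mod_cast this
    _ = 2 * (Fintype.card Fq : ℝ) * E.card := by push_cast; ring

theorem stmt_16 :
    (∃ C : ℝ, 0 < C ∧
      ∀ (Fq : Type) [Field Fq] [Fintype Fq], ∀ (E : Finset (Fin 2 → Fq)),
        (((E ×ˢ E).filter
            (fun p => (p.1 0 - p.2 0) ^ 2 + (p.1 1 - p.2 1) ^ 2 = 0)).card : ℝ) ≤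
          C * ((E.card : ℝ) ^ 2 / (Fintype.card Fq : ℝ) + (Fintype.card Fq : ℝ) * E.card)) ∧
    (∀ C' : ℝ, 0 < C' →
      ∃ D : ℝ, 0 < D ∧
        ∀ (Fq : Type) [Field Fq] [Fintype Fq], ∀ (E : Finset (Fin 2 → Fq)),
          (D * (Fintype.card Fq : ℝ) ≤ (E.card : ℝ)) →
          (((E ×ˢ E).filter
              (fun p => (p.1 0 - p.2 0) ^ 2 + (p.1 1 - p.2 1) ^ 2 = 0)).card : ℝ) ≤
            C' * (E.card : ℝ) ^ 2) := by
  constructor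
  · refine ⟨2, by norm_num, fun Fq _ _ E => ?_⟩
    have h := main_bound E
    have hq : (0 : ℝ) < Fintype.card Fq := by
      exact_mod_cast Fintype.card_pos
    have hE : (0 : ℝ) ≤ (E.card : ℝ) ^ 2 / Fintype.card Fq := by positivity
    nlinarith
  · intro C' hC'
    refine ⟨2 / C', by positivity, fun Fq _ _ E hD => ?_⟩
    have h := main_bound E
    have hq : (0 : ℝ) ≤ (Fintype.card Fq : ℝ) := by positivity
    have hE : (0 : ℝ) ≤ (E.card : ℝ) := by positivity
    have h2 : 2 * (Fintype.card Fq : ℝ) ≤ C' * E.card := by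
      have h3 := mul_le_mul_of_nonneg_left hD (le_of_lt hC')
      have e : C' * (2 / C' * (Fintype.card Fq : ℝ)) = 2 * (Fintype.card Fq : ℝ) := by
        field_simp
      linarith
    calc (((E ×ˢ E).filter _).card : ℝ) ≤ 2 * (Fintype.card Fq : ℝ) * E.card := h
      _ ≤ C' * E.card * E.card := mul_le_mul_of_nonneg_right h2 hE
      _ = C' * (E.card : ℝ) ^ 2 := by ring
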